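/- Let (a, x) be coprime integers with 1 ≤ a < x, and let r be the remainder of x divided by a. Define J_{x/a}(q) := q·N_q(x/a) + (1−q)·D_q(x/a). Then J_{x/a}(q) = q²·(a, x−a)_q − (q−1)·(a, x)_q, and (a, x)_q = J_{x/a}(q) + q·(a−r, r)_q. -/

import Mathlib

open Polynomial

/-- The `q`-integer `[c]_q = 1 + q + ⋯ + q^{c-1}` as a polynomial in `ℤ[q]`. -/
noncomputable def qInt (c : ℕ) : Polynomial ℤ := ∑ i ∈ Finset.range c, X ^ i

/-- The polynomial `(a, b)_q ∈ ℤ[q]` associated to a pair of coprime positive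
integers: `(1, n)_q = (n, 1)_q = [n+1]_q`; if `a < b` then
`(a,b)_q = (a-r, r)_q + q·(a, b-a)_q` with `r = b % a`; if `a > b` then
`(a,b)_q = (a-b, b)_q + q^⌈a/b⌉·(r, b-r)_q` with `r = a % b`.
(Values on non-coprime or zero inputs are junk.) -/
noncomputable def W : ℕ → ℕ → Polynomial ℤ
  | 1, b => qInt (b + 1)
  | a, 1 => qInt (a + 1)
  | 0, _ => 0
  | _, 0 => 0
  | a + 2, b + 2 =>
    if a < b then
      W (a + 2 - (b + 2) % (a + 2)) ((b + 2) % (a + 2)) + X * W (a + 2) (b - a)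
    else
      W (a - b) (b + 2) +
        X ^ ((a + 2 + (b + 2) - 1) / (b + 2)) *
          W ((a + 2) % (b + 2)) (b + 2 - (a + 2) % (b + 2))
  termination_by a b => a + b
  decreasing_by
  · have := Nat.mod_lt (b + 2) (show 0 < a + 2 by omega); omega
  · omega
  · omega
  · have := Nat.mod_lt (a + 2) (show 0 < b + 2 by omega); omega

/-- The sequence of digits of the negative continued fraction expansion
`x/a = [c₁, …, c_l]⁻` (each `cᵢ = ⌈·⌉` of the current fraction). By convention
`ncfDigits x 0 = []` (for `1/0 = ∞`) and `ncfDigits x 1 = [x]`. -/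
def ncfDigits : ℕ → ℕ → List ℕ
  | _, 0 => []
  | x, 1 => [x]
  | x, a + 2 =>
      (x + (a + 2) - 1) / (a + 2) ::
        ncfDigits (a + 2) ((x + (a + 2) - 1) / (a + 2) * (a + 2) - x)
  termination_by x a => a
  decreasing_by
    have := Nat.div_mul_le_self (x + (a + 2) - 1) (a + 2); omega

/-- The (coprime) numerator and denominator of the Morier-Genoud–Ovsienko
`q`-deformation of the negative continued fraction `[c₁, …, c_l]⁻`, computed by
the continuant recursion `(N, D) ↦ ([c]_q·N - q^{c-1}·D, N)`, with `(1, 0)` for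
the empty list. -/
noncomputable def qCF : List ℕ → Polynomial ℤ × Polynomial ℤ
  | [] => (1, 0)
  | c :: rest =>
      let p := qCF rest
      (qInt c * p.1 - X ^ (c - 1) * p.2, p.1)

/-- Numerator `N_q(x/a)` of the Morier-Genoud–Ovsienko `q`-rational `[x/a]_q`. -/
noncomputable def Nq (x a : ℕ) : Polynomial ℤ := (qCF (ncfDigits x a)).1

/-- Denominator `D_q(x/a)` of the Morier-Genoud–Ovsienko `q`-rational `[x/a]_q`. -/
noncomputable def Dq (x a : ℕ) : Polynomial ℤ := (qCF (ncfDigits x a)).2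

/-- The normalized Jones polynomial `J_{x/a}(q) = q·N_q(x/a) + (1-q)·D_q(x/a)`. -/
noncomputable def Jq (x a : ℕ) : Polynomial ℤ := X * Nq x a + (1 - X) * Dq x a

lemma qInt_one : qInt 1 = 1 := by simp [qInt]

lemma qInt_succ (n : ℕ) : qInt (n + 1) = 1 + X * qInt n := by
  rw [qInt, qInt, Finset.sum_range_succ', Finset.mul_sum]
  simp only [pow_zero, pow_succ']
  exact add_comm _ _

lemma qInt_succ' (n : ℕ) : qInt (n + 1) = qInt n + X ^ n := Finset.sum_range_succ _ _

lemma W_one_left (b : ℕ) : W 1 b = qInt (b + 1) := by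
  match b with
  | 0 => rw [W]
  | 1 => rw [W]
  | n + 2 => rw [W]

lemma W_zero_one : W 0 1 = qInt 1 := by
  rw [W]; omega

lemma W_one_right (a : ℕ) : W a 1 = qInt (a + 1) := by
  match a with
  | 0 => exact W_zero_one
  | 1 => exact W_one_left 1
  | n + 2 => rw [W]; omega

lemma W_rec_aux (a b : ℕ) (h : a < b) :
    W (a + 2) (b + 2) =
      W (a + 2 - (b + 2) % (a + 2)) ((b + 2) % (a + 2)) + X * W (a + 2) (b - a) := by
  rw [W.eq_5, if_pos h]

lemma W_rec_aux' (a b : ℕ) (h : ¬ a < b) :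
    W (a + 2) (b + 2) =
      W (a - b) (b + 2) +
        X ^ ((a + 2 + (b + 2) - 1) / (b + 2)) *
          W ((a + 2) % (b + 2)) (b + 2 - (a + 2) % (b + 2)) := by
  rw [W.eq_5, if_neg h]

/-- R1: for `1 ≤ a < b`, `W a b = W (a - b%a) (b%a) + X * W a (b-a)`. -/
lemma W_rec1 (a b : ℕ) (ha : 1 ≤ a) (hab : a < b) :
    W a b = W (a - b % a) (b % a) + X * W a (b - a) := by
  by_cases h1 : a = 1
  · subst h1
    have hb : b - 1 + 1 = b := by omega
    simp only [Nat.mod_one, Nat.sub_zero, W_one_left, hb]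
    rw [qInt_succ b]
    norm_num [qInt_one]
  · obtain ⟨c, rfl⟩ : ∃ c, a = c + 2 := ⟨a - 2, by omega⟩
    have key := W_rec_aux c (b - 2) (by omega)
    have hb : b - 2 + 2 = b := by omega
    rw [hb] at key
    rw [show b - (c + 2) = b - 2 - c from by omega, key]

/-- R2: for `1 ≤ b < a`, `W a b = W (a-b) b + X^⌈a/b⌉ * W (a%b) (b - a%b)`. -/
lemma W_rec2 (a b : ℕ) (hb : 1 ≤ b) (hab : b < a) :
    W a b = W (a - b) b + X ^ ((a + b - 1) / b) * W (a % b) (b - a % b) := by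
  by_cases h1 : b = 1
  · subst h1
    simp only [Nat.mod_one, Nat.div_one, Nat.add_sub_cancel, Nat.sub_zero]
    rw [W_one_right, W_one_right, W_zero_one, qInt_one]
    rw [show a - 1 + 1 = a from by omega, qInt_succ' a]
    ring
  · obtain ⟨c, rfl⟩ : ∃ c, b = c + 2 := ⟨b - 2, by omega⟩
    have key := W_rec_aux' (a - 2) c (by omega)
    have h2 : a - 2 + 2 = a := by omega
    rw [h2] at key
    rw [show a - (c + 2) = a - 2 - c from by omega, key]

lemma qInt_two : qInt 2 = 1 + X := by
  rw [show (2:ℕ) = 1 + 1 from rfl, qInt_succ, qInt_one, mul_one]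

lemma W_key (a r : ℕ) (h1 : 1 ≤ r) (h2 : r < a) (hco : Nat.Coprime a r) (k : ℕ) :
    W a (k * a + r) =
      qInt (k + 2) * W (a - r) r - X ^ (k + 1) * W (a - r - a % (a - r)) (a % (a - r)) := by
  induction k with
  | zero =>
    simp only [Nat.zero_mul, Nat.zero_add, zero_add, pow_one]
    have e0 : a % (a - r) = r % (a - r) := by
      rw [Nat.mod_eq_sub_mod (by omega : a - r ≤ a), show a - (a - r) = r from by omega]
    rw [W_rec2 a r h1 h2, qInt_two]
    rcases lt_trichotomy r (a - r) with hc | hc | hc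
    · -- r < a - r
      have e1 : a % (a - r) = r := by rw [e0, Nat.mod_eq_of_lt hc]
      have e2 : (a - r) % r = a % r := (Nat.mod_eq_sub_mod h2.le).symm
      have e3 : (a + r - 1) / r = (a - r + r - 1) / r + 1 := by
        rw [show a + r - 1 = (a - r + r - 1) + r from by omega, Nat.add_div_right _ h1]
      have key2 := W_rec2 (a - r) r h1 hc
      rw [e2] at key2
      rw [e1, e3]
      linear_combination (-X) * key2
    · -- r = a - r : forces a = 2, r = 1
      have hr1 : r = 1 := by
        have hd : r ∣ a := ⟨2, by omega⟩
        have hdg := Nat.dvd_gcd hd (dvd_refl r)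
        rw [hco] at hdg
        exact Nat.dvd_one.mp hdg
      have ha2 : a = 2 := by omega
      subst hr1; subst ha2
      norm_num
      rw [show W 1 1 = qInt 2 from W_one_left 1, show W 1 0 = qInt 1 from W_one_left 0,
        W_zero_one, qInt_one, qInt_two]
      ring
    · -- a - r < r
      have har : 1 ≤ a - r := by omega
      have e1 : (a + r - 1) / r = 2 := Nat.div_eq_of_lt_le (by omega) (by omega)
      have e2 : a % r = a - r := by
        rw [Nat.mod_eq_sub_mod h2.le, Nat.mod_eq_of_lt (by omega)]
      have key2 := W_rec1 (a - r) r har hc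
      rw [e0, e1, e2]
      linear_combination (-X) * key2
  | succ k ih =>
    have hm : (k + 1) * a = k * a + a := by ring
    have hlt : a < (k + 1) * a + r := by omega
    have emod : ((k + 1) * a + r) % a = r := by
      rw [show (k + 1) * a + r = r + (k + 1) * a from by ring, Nat.add_mul_mod_self_right,
        Nat.mod_eq_of_lt h2]
    have esub : (k + 1) * a + r - a = k * a + r := by omega
    rw [W_rec1 a ((k + 1) * a + r) (by omega) hlt, emod, esub, ih,
      show k + 1 + 2 = (k + 2) + 1 from rfl, qInt_succ (k + 2)]
    ring

lemma ncf_step (x a : ℕ) (h2 : 2 ≤ a) (hr : x % a ≠ 0) :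
    ncfDigits x a = (x / a + 1) :: ncfDigits a (a - x % a) := by
  obtain ⟨c, rfl⟩ : ∃ c, a = c + 2 := ⟨a - 2, by omega⟩
  rw [ncfDigits]
  have hx1 : x - 1 + 1 = x := by
    rcases Nat.eq_zero_or_pos x with h | h
    · exfalso; apply hr; rw [h]; simp
    · omega
  have hnd : ¬ (c + 2) ∣ x := fun h => hr (Nat.dvd_iff_mod_eq_zero.mp h)
  have e1 : (x + (c + 2) - 1) / (c + 2) = x / (c + 2) + 1 := by
    rw [show x + (c + 2) - 1 = (x - 1) + (c + 2) from by omega, Nat.add_div_right _ (by omega)]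
    have hsd := Nat.succ_div (a := x - 1) (b := c + 2)
    rw [hx1] at hsd
    rw [hsd, if_neg hnd]
  rw [e1]
  have hdm := Nat.div_add_mod x (c + 2)
  have hml := Nat.mod_lt x (show 0 < c + 2 by omega)
  have h6 : (x / (c + 2) + 1) * (c + 2) = (c + 2) * (x / (c + 2)) + (c + 2) := by ring
  rw [h6, show (c + 2) * (x / (c + 2)) + (c + 2) - x = c + 2 - x % (c + 2) from by
    generalize hg : (c + 2) * (x / (c + 2)) = t at hdm ⊢
    omega]

lemma ncf_one (x : ℕ) : ncfDigits x 1 = [x] := by rw [ncfDigits]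

lemma main_lemma (a : ℕ) : ∀ x : ℕ, Nat.Coprime a x → 1 ≤ a → a < x →
    X * Nq x a = W a x - W (a - x % a) (x % a) ∧ Dq x a = W (a - x % a) (x % a) := by
  induction a using Nat.strong_induction_on with
  | _ a ih =>
    intro x hco ha hax
    by_cases h1 : a = 1
    · subst h1
      have hN : Nq x 1 = qInt x := by rw [Nq, ncf_one]; simp [qCF]
      have hD : Dq x 1 = 1 := by rw [Dq, ncf_one]; simp [qCF]
      simp only [Nat.mod_one, Nat.sub_zero, hN, hD]
      rw [W_one_left, show W 1 0 = qInt 1 from W_one_left 0, qInt_one, qInt_succ x]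
      exact ⟨by ring, rfl⟩
    · have h2 : 2 ≤ a := by omega
      have hrlt : x % a < a := Nat.mod_lt x (by omega)
      have hr0 : x % a ≠ 0 := by
        intro h
        have hd : a ∣ x := Nat.dvd_of_mod_eq_zero h
        have := Nat.Coprime.eq_one_of_dvd hco hd
        omega
      have hcoar : Nat.Coprime a (x % a) := by
        have hg := Nat.gcd_rec a x
        rw [hco] at hg
        exact Nat.coprime_comm.mp hg.symm
      have hco1 : Nat.Coprime (a - x % a) (x % a) :=
        (Nat.coprime_sub_self_left hrlt.le).mpr hcoar
      have e : a - (a - x % a) = x % a := by omega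
      have hco2 : Nat.Coprime (a - x % a) a := by
        have hiff := Nat.coprime_sub_self_right (show a - x % a ≤ a from by omega)
        rw [e] at hiff
        exact hiff.mp hco1
      have hd := ncf_step x a h2 hr0
      have hNq : Nq x a = qInt (x / a + 1) * Nq a (a - x % a) -
          X ^ (x / a) * Dq a (a - x % a) := by
        rw [Nq, hd]; simp [qCF, Nq, Dq]
      have hDq : Dq x a = Nq a (a - x % a) := by rw [Dq, hd]; simp [qCF, Nq]
      obtain ⟨ih1, ih2⟩ := ih (a - x % a) (by omega) a hco2 (by omega) (by omega)
      have hR := W_rec1 (a - x % a) a (by omega) (by omega)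
      rw [e] at hR
      have hNq' : X * Nq a (a - x % a) = X * W (a - x % a) (x % a) := by
        rw [ih1, hR]; ring
      have hNq'' : Nq a (a - x % a) = W (a - x % a) (x % a) :=
        mul_left_cancel₀ Polynomial.X_ne_zero hNq'
      have h7 : 1 ≤ x / a := (Nat.one_le_div_iff (show 0 < a by omega)).mpr hax.le
      obtain ⟨m, hm⟩ : ∃ m, x / a = m + 1 := ⟨x / a - 1, by omega⟩
      have hdm := Nat.div_add_mod x a
      rw [hm] at hdm
      have hma : a * (m + 1) = a * m + a := by ring
      rw [hma] at hdm
      have ex : m * a + x % a = x - a := by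
        have : m * a = a * m := by ring
        omega
      have hk := W_key a (x % a) (by omega) hrlt hcoar m
      rw [ex] at hk
      constructor
      · have hWx := W_rec1 a x ha hax
        rw [hNq, hm, show m + 1 + 1 = m + 2 from rfl, hWx, hk, ih2, hNq'']
        ring
      · rw [hDq, hNq'']


/-- For coprime `1 ≤ a < x` with `r = x % a`, and
`J_{x/a}(q) = q·N_q(x/a) + (1-q)·D_q(x/a)`:
`J_{x/a}(q) = q²·(a, x−a)_q − (q−1)·(a, x)_q` and
`(a, x)_q = J_{x/a}(q) + q·(a−r, r)_q`. -/
theorem Jq_eq_W (a x : ℕ) (hco : Nat.Coprime a x) (ha : 1 ≤ a) (hax : a < x) :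
    Jq x a = X ^ 2 * W a (x - a) - (X - 1) * W a x ∧
    W a x = Jq x a + X * W (a - x % a) (x % a) := by
  obtain ⟨h1, h2⟩ := main_lemma a x hco ha hax
  have hWx := W_rec1 a x ha hax
  rw [Jq]
  constructor
  · linear_combination h1 + (1 - X) * h2 + X * hWx
  · linear_combination (-1 : Polynomial ℤ) * h1 - (1 - X) * h2
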